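/- arXiv:2010.09153 — 2 statements merged into one kernel-verified Lean document; each statement's English description precedes it below -/
import Mathlib

section
/- Let A be an n×n real symmetric positive definite matrix and let (x, ξ) ∈ ℝⁿ × ℝⁿ satisfy ⟨A⁻¹x, x⟩ = 1, ⟨A⁻¹x, ξ⟩ = 0 and ‖ξ‖ = 1. Then L(x, ξ) is positive semidefinite and its kernel is exactly the two-dimensional span of {ξ, A⁻¹x}. Consequently the eigenvalues of L(x, ξ), listed with multiplicity, are 0 = 0 < λ₁ ≤ … ≤ λ_{n−2}: the eigenvalue 0 has multiplicity exactly two and the remaining n−2 eigenvalues are strictly positive. -/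
open Matrix

/-- The orthogonal projection onto the hyperplane orthogonal to a unit vector `ξ`:
`P_ξ = I - ξ ξᵀ`. -/
noncomputable def projPerp {n : ℕ} (ξ : Fin n → ℝ) : Matrix (Fin n) (Fin n) ℝ :=
  1 - vecMulVec ξ ξ

/-- Moser's Lax matrix `L(x, ξ) = P_ξ (A - x xᵀ) P_ξ`. -/
noncomputable def moserLax {n : ℕ} (A : Matrix (Fin n) (Fin n) ℝ) (x ξ : Fin n → ℝ) :
    Matrix (Fin n) (Fin n) ℝ :=
  projPerp ξ * (A - vecMulVec x x) * projPerp ξ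

lemma vecMulVec_mulVec' {n : ℕ} (a b v : Fin n → ℝ) :
    vecMulVec a b *ᵥ v = (b ⬝ᵥ v) • a := by
  ext i
  simp only [mulVec, dotProduct, vecMulVec_apply, Pi.smul_apply, smul_eq_mul,
    Finset.sum_mul]
  exact Finset.sum_congr rfl fun j _ => by ring

lemma dot_mulVec_symm {n : ℕ} {M : Matrix (Fin n) (Fin n) ℝ} (hM : Mᵀ = M)
    (a b : Fin n → ℝ) : a ⬝ᵥ (M *ᵥ b) = (M *ᵥ a) ⬝ᵥ b := by
  rw [dotProduct_mulVec, ← hM, vecMul_transpose, hM]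

/-- For `(x, ξ) ∈ S*E_A` with `A` symmetric positive definite, `L(x, ξ)` is positive
semidefinite with kernel exactly the two-dimensional span of `{ξ, A⁻¹x}`;
equivalently, the eigenvalue `0` has multiplicity exactly two and the remaining
`n - 2` eigenvalues are strictly positive. -/
theorem stmt3 {n : ℕ} (A : Matrix (Fin n) (Fin n) ℝ) (hA : A.PosDef)
    (x ξ : Fin n → ℝ) (hx : A⁻¹.mulVec x ⬝ᵥ x = 1)
    (hperp : A⁻¹.mulVec x ⬝ᵥ ξ = 0) (hnorm : ξ ⬝ᵥ ξ = 1) :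
    (moserLax A x ξ).PosSemidef ∧
    LinearMap.ker (moserLax A x ξ).mulVecLin
      = Submodule.span ℝ ({ξ, A⁻¹.mulVec x} : Set (Fin n → ℝ)) ∧
    Module.finrank ℝ (LinearMap.ker (moserLax A x ξ).mulVecLin) = 2 := by
  classical
  set u : Fin n → ℝ := A⁻¹ *ᵥ x with hu
  have hAsym : Aᵀ = A := by
    have := hA.isHermitian
    rwa [Matrix.IsHermitian, conjTranspose_eq_transpose_of_trivial] at this
  have hdet : IsUnit A.det := hA.det_pos.ne'.isUnit
  have hAu : A *ᵥ u = x := by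
    rw [hu, mulVec_mulVec, Matrix.mul_nonsing_inv A hdet, one_mulVec]
  have hxu : x ⬝ᵥ u = 1 := by rw [dotProduct_comm]; exact hx
  have hux : u ⬝ᵥ x = 1 := hx
  have hξu : ξ ⬝ᵥ u = 0 := by rw [dotProduct_comm]; exact hperp
  have hP : ∀ v, projPerp ξ *ᵥ v = v - (ξ ⬝ᵥ v) • ξ := by
    intro v
    rw [projPerp, sub_mulVec, one_mulVec, vecMulVec_mulVec']
  have hPu : projPerp ξ *ᵥ u = u := by rw [hP, hξu]; simp
  have hPξ : projPerp ξ *ᵥ ξ = 0 := by rw [hP, hnorm]; simp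
  have hBv : ∀ w, (A - vecMulVec x x) *ᵥ w = A *ᵥ w - (x ⬝ᵥ w) • x := by
    intro w
    rw [sub_mulVec, vecMulVec_mulVec']
  have hBu : (A - vecMulVec x x) *ᵥ u = 0 := by
    rw [hBv, hAu, hxu, one_smul, sub_self]
  have hLv : ∀ v, moserLax A x ξ *ᵥ v
      = projPerp ξ *ᵥ ((A - vecMulVec x x) *ᵥ (projPerp ξ *ᵥ v)) := by
    intro v
    simp only [moserLax, ← mulVec_mulVec]
  have hLξ : moserLax A x ξ *ᵥ ξ = 0 := by
    rw [hLv, hPξ, mulVec_zero, mulVec_zero]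
  have hLu : moserLax A x ξ *ᵥ u = 0 := by
    rw [hLv, hPu, hBu, mulVec_zero]
  have hPsym : (projPerp ξ)ᵀ = projPerp ξ := by
    rw [projPerp, transpose_sub, transpose_one]
    congr 1
    ext i j
    simp [vecMulVec_apply, mul_comm]
  have hBsym : (A - vecMulVec x x)ᵀ = A - vecMulVec x x := by
    rw [transpose_sub, hAsym]
    congr 1
    ext i j
    simp [vecMulVec_apply, mul_comm]
  have hLsym : (moserLax A x ξ)ᵀ = moserLax A x ξ := by
    rw [moserLax, transpose_mul, transpose_mul, hPsym, hBsym, mul_assoc]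
  -- key quadratic form identity
  have key : ∀ v : Fin n → ℝ,
      v ⬝ᵥ (moserLax A x ξ *ᵥ v)
        = (projPerp ξ *ᵥ v - (x ⬝ᵥ (projPerp ξ *ᵥ v)) • u)
            ⬝ᵥ (A *ᵥ (projPerp ξ *ᵥ v - (x ⬝ᵥ (projPerp ξ *ᵥ v)) • u)) := by
    intro v
    set w : Fin n → ℝ := projPerp ξ *ᵥ v with hw
    set c : ℝ := x ⬝ᵥ w with hc
    have h1 : v ⬝ᵥ (moserLax A x ξ *ᵥ v) = w ⬝ᵥ ((A - vecMulVec x x) *ᵥ w) := by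
      rw [hLv, dot_mulVec_symm hPsym, ← hw]
    have h2 : w ⬝ᵥ ((A - vecMulVec x x) *ᵥ w) = w ⬝ᵥ (A *ᵥ w) - c * c := by
      rw [hBv, dotProduct_sub, dotProduct_smul, smul_eq_mul, dotProduct_comm w x, ← hc]
    have h3 : A *ᵥ (w - c • u) = A *ᵥ w - c • x := by
      rw [mulVec_sub, mulVec_smul, hAu]
    have h4 : u ⬝ᵥ (A *ᵥ w) = c := by
      rw [dot_mulVec_symm hAsym, hAu, hc]
    have h5 : (w - c • u) ⬝ᵥ (A *ᵥ (w - c • u)) = w ⬝ᵥ (A *ᵥ w) - c * c := by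
      rw [h3, sub_dotProduct, dotProduct_sub, dotProduct_sub, smul_dotProduct,
        smul_dotProduct, dotProduct_smul, dotProduct_smul, h4, dotProduct_comm w x,
        ← hc, hux]
      simp only [smul_eq_mul]
      ring
    rw [h1, h2, h5]
  have hpsd : (moserLax A x ξ).PosSemidef := by
    refine Matrix.PosSemidef.of_dotProduct_mulVec_nonneg ?_ ?_
    · rw [Matrix.IsHermitian, conjTranspose_eq_transpose_of_trivial]
      exact hLsym
    · intro v
      have := hA.posSemidef.dotProduct_mulVec_nonneg (projPerp ξ *ᵥ v - (x ⬝ᵥ (projPerp ξ *ᵥ v)) • u)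
      simpa [key v] using this
  have hune : u ≠ 0 := by
    intro h
    rw [h] at hux
    simp at hux
  -- kernel description
  have hker : LinearMap.ker (moserLax A x ξ).mulVecLin
      = Submodule.span ℝ ({ξ, u} : Set (Fin n → ℝ)) := by
    ext v
    rw [LinearMap.mem_ker, mulVecLin_apply, Submodule.mem_span_pair]
    constructor
    · intro hv
      have hq : v ⬝ᵥ (moserLax A x ξ *ᵥ v) = 0 := by rw [hv, dotProduct_zero]
      rw [key v] at hq
      set w : Fin n → ℝ := projPerp ξ *ᵥ v with hw
      set c : ℝ := x ⬝ᵥ w with hc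
      have hz : w - c • u = 0 := by
        by_contra hne
        exact absurd hq (ne_of_gt (by simpa using hA.re_dotProduct_pos hne))
      have hwcu : w = c • u := by
        rwa [sub_eq_zero] at hz
      refine ⟨ξ ⬝ᵥ v, c, ?_⟩
      have h6 : c • u = v - (ξ ⬝ᵥ v) • ξ := by rw [← hwcu]; exact hP v
      rw [h6]
      abel
    · rintro ⟨a, b, rfl⟩
      rw [mulVec_add, mulVec_smul, mulVec_smul, hLξ, hLu, smul_zero, smul_zero,
        add_zero]
  have hli : LinearIndependent ℝ ![ξ, u] := by
    rw [LinearIndependent.pair_iff]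
    intro s t hst
    have hdst : ξ ⬝ᵥ (s • ξ + t • u) = s := by
      rw [dotProduct_add, dotProduct_smul, dotProduct_smul, hnorm, hξu]
      simp
    rw [hst, dotProduct_zero] at hdst
    have hs : s = 0 := hdst.symm
    subst hs
    rw [zero_smul, zero_add] at hst
    rcases smul_eq_zero.mp hst with ht | h
    · exact ⟨rfl, ht⟩
    · exact absurd h hune
  refine ⟨hpsd, hker, ?_⟩
  rw [hker]
  have hrange : Set.range ![ξ, u] = ({ξ, u} : Set (Fin n → ℝ)) := by
    simp [Matrix.range_cons, Matrix.range_empty]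
    exact Set.pair_comm u ξ
  rw [← hrange, finrank_span_eq_card hli]
  simp
end

section
/- Let A be an n×n real symmetric matrix, let z ∈ ℝ be a nonzero number that is not an eigenvalue of A, let x ∈ ℝⁿ, and let ξ ∈ ℝⁿ be a unit vector. Then Moser's identity holds: (1/z) · det(L(x, ξ) − z I) / det(A − z I) = Q_z(ξ) (1 + Q_z(x)) − Q_z(x, ξ)², where Q_z(u, v) = ⟨(z I − A)⁻¹ u, v⟩ and Q_z(u) = Q_z(u, u). -/
open Matrix

section helpers
variable {n : ℕ}

lemma vmv_mul (u v : Fin n → ℝ) (M : Matrix (Fin n) (Fin n) ℝ) :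
    vecMulVec u v * M = vecMulVec u (v ᵥ* M) := by
  ext i j
  simp only [mul_apply, vecMulVec_apply, vecMul, dotProduct, Finset.mul_sum]
  exact Finset.sum_congr rfl fun k _ => by ring

lemma mul_vmv (M : Matrix (Fin n) (Fin n) ℝ) (u v : Fin n → ℝ) :
    M * vecMulVec u v = vecMulVec (M *ᵥ u) v := by
  ext i j
  simp only [mul_apply, vecMulVec_apply, mulVec, dotProduct, Finset.sum_mul]
  exact Finset.sum_congr rfl fun k _ => by ring

lemma vmv_vmv (u v w t : Fin n → ℝ) :
    vecMulVec u v * vecMulVec w t = (v ⬝ᵥ w) • vecMulVec u t := by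
  ext i j
  simp only [mul_apply, vecMulVec_apply, Matrix.smul_apply, smul_eq_mul, dotProduct, Finset.sum_mul]
  exact Finset.sum_congr rfl fun k _ => by ring

lemma vmv_mulVec (u v w : Fin n → ℝ) :
    vecMulVec u v *ᵥ w = (v ⬝ᵥ w) • u := by
  ext i
  simp only [mulVec, vecMulVec_apply, dotProduct, Pi.smul_apply, smul_eq_mul, Finset.sum_mul]
  exact Finset.sum_congr rfl fun k _ => by ring

end helpers

/-- The confocal quadratic form `Q_z(u, v) = ⟨(zI - A)⁻¹ u, v⟩`. -/
noncomputable def confocalQ {n : ℕ} (A : Matrix (Fin n) (Fin n) ℝ) (z : ℝ)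
    (u v : Fin n → ℝ) : ℝ :=
  (z • (1 : Matrix (Fin n) (Fin n) ℝ) - A)⁻¹.mulVec u ⬝ᵥ v

/-- Moser's identity: for `z ≠ 0` not an eigenvalue of the symmetric matrix `A`,
`(1/z) det(L(x,ξ) - zI)/det(A - zI) = Q_z(ξ)(1 + Q_z(x)) - Q_z(x, ξ)²`. -/
theorem stmt8 {n : ℕ} (A : Matrix (Fin n) (Fin n) ℝ) (hA : Aᵀ = A)
    (z : ℝ) (hz0 : z ≠ 0) (hz : z ∉ spectrum ℝ A)
    (x ξ : Fin n → ℝ) (hξ : ξ ⬝ᵥ ξ = 1) :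
    (1 / z) * ((moserLax A x ξ - z • 1).det / (A - z • 1).det) =
      confocalQ A z ξ ξ * (1 + confocalQ A z x x) - (confocalQ A z x ξ) ^ 2 := by
  set B : Matrix (Fin n) (Fin n) ℝ := A - z • 1 with hBdef
  have hzB : z • (1 : Matrix (Fin n) (Fin n) ℝ) - A = -B := by rw [hBdef, neg_sub]
  have hunit : IsUnit (z • (1 : Matrix (Fin n) (Fin n) ℝ) - A) := by
    have := spectrum.notMem_iff.mp hz
    rwa [Algebra.algebraMap_eq_smul_one] at this
  have hBunit : IsUnit B := by
    have : IsUnit (-B) := hzB ▸ hunit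
    simpa using this.neg
  have hBdetu : IsUnit B.det := (Matrix.isUnit_iff_isUnit_det B).mp hBunit
  have hBdet0 : B.det ≠ 0 := hBdetu.ne_zero
  set G : Matrix (Fin n) (Fin n) ℝ := B⁻¹ with hGdef
  have hBG : B * G = 1 := Matrix.mul_nonsing_inv B hBdetu
  have hGB : G * B = 1 := Matrix.nonsing_inv_mul B hBdetu
  have hBsym : Bᵀ = B := by rw [hBdef, transpose_sub, hA, transpose_smul, transpose_one]
  have hGsym : Gᵀ = G := by rw [hGdef, Matrix.transpose_nonsing_inv, hBsym]
  set M : Matrix (Fin n) (Fin n) ℝ := A - vecMulVec x x with hMdef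
  have hMsym : Mᵀ = M := by
    rw [hMdef, transpose_sub, hA]
    congr 1
    ext i j
    simp [vecMulVec_apply, mul_comm]
  set a : Fin n → ℝ := M *ᵥ ξ with hadef
  set s : ℝ := x ⬝ᵥ ξ with hsdef
  set c : ℝ := a ⬝ᵥ ξ with hcdef
  set p : ℝ := G *ᵥ ξ ⬝ᵥ ξ with hpdef
  set q : ℝ := G *ᵥ x ⬝ᵥ ξ with hqdef
  set r : ℝ := G *ᵥ x ⬝ᵥ x with hrdef
  have hvG : ∀ u : Fin n → ℝ, u ᵥ* G = G *ᵥ u := by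
    intro u
    conv_lhs => rw [← hGsym]
    rw [vecMul_transpose]
  have hsym : ∀ u v : Fin n → ℝ, u ⬝ᵥ (G *ᵥ v) = G *ᵥ u ⬝ᵥ v := by
    intro u v
    rw [Matrix.dotProduct_mulVec, hvG]
  have hGa : G *ᵥ a = ξ + z • (G *ᵥ ξ) - s • (G *ᵥ x) := by
    have ha' : a = B *ᵥ ξ + z • ξ - s • x := by
      rw [hadef, hMdef, sub_mulVec, vmv_mulVec, hBdef, sub_mulVec, smul_mulVec,
        one_mulVec, hsdef]
      abel
    rw [ha', mulVec_sub, mulVec_add, mulVec_smul, mulVec_smul, mulVec_mulVec, hGB,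
      one_mulVec]
  have h1 : x ⬝ᵥ (G *ᵥ x) = r := by rw [hrdef, hsym]
  have h2 : x ⬝ᵥ (G *ᵥ ξ) = q := by rw [hqdef, hsym]
  have h3 : ξ ⬝ᵥ (G *ᵥ x) = q := by rw [hqdef, dotProduct_comm]
  have h4 : ξ ⬝ᵥ (G *ᵥ ξ) = p := by rw [hpdef, dotProduct_comm]
  have h5 : x ⬝ᵥ (G *ᵥ a) = s + z * q - s * r := by
    rw [hGa, dotProduct_sub, dotProduct_add, dotProduct_smul, dotProduct_smul, h1, h2,
      smul_eq_mul, smul_eq_mul, hsdef]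
  have h6 : ξ ⬝ᵥ (G *ᵥ a) = 1 + z * p - s * q := by
    rw [hGa, dotProduct_sub, dotProduct_add, dotProduct_smul, dotProduct_smul, h3, h4,
      smul_eq_mul, smul_eq_mul, hξ]
  have h7 : a ⬝ᵥ (G *ᵥ x) = s + z * q - s * r := by
    rw [hsym, dotProduct_comm, h5]
  have h8 : a ⬝ᵥ (G *ᵥ ξ) = 1 + z * p - s * q := by
    rw [hsym, dotProduct_comm, h6]
  have h9 : a ⬝ᵥ (G *ᵥ a) = c + z * (1 + z * p - s * q) - s * (s + z * q - s * r) := by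
    rw [hGa, dotProduct_sub, dotProduct_add, dotProduct_smul, dotProduct_smul, h7, h8,
      smul_eq_mul, smul_eq_mul, hcdef]
  -- rank-3 update matrices
  set U : Matrix (Fin n) (Fin 3) ℝ := Matrix.of fun i k => ![x, ξ, a] k i with hUdef
  set Vt : Matrix (Fin 3) (Fin n) ℝ := Matrix.of ![-x, c • ξ - a, -ξ] with hVtdef
  set GU : Matrix (Fin n) (Fin 3) ℝ :=
    Matrix.of (fun i k => ![G *ᵥ x, G *ᵥ ξ, G *ᵥ a] k i) with hGUdef
  have hL : moserLax A x ξ - z • 1 = B + U * Vt := by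
    have hUV : U * Vt = -(vecMulVec x x) - vecMulVec ξ a - vecMulVec a ξ
        + c • vecMulVec ξ ξ := by
      ext i j
      show (∑ k : Fin 3, (![x, ξ, a] k i) * (![-x, c • ξ - a, -ξ] k j)) = _
      rw [Fin.sum_univ_three]
      show x i * (-x) j + ξ i * (c • ξ - a) j + a i * (-ξ) j = _
      simp only [Pi.neg_apply, Pi.sub_apply, Pi.smul_apply, smul_eq_mul,
        Matrix.add_apply, Matrix.sub_apply, Matrix.neg_apply, vecMulVec_apply,
        Matrix.smul_apply]
      ring
    have hvm : ξ ᵥ* M = a := by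
      rw [hadef]
      conv_lhs => rw [← hMsym]
      rw [vecMul_transpose]
    have hexp : moserLax A x ξ = M - vecMulVec ξ a - vecMulVec a ξ + c • vecMulVec ξ ξ := by
      rw [moserLax, projPerp]
      rw [← hMdef]
      rw [sub_mul, one_mul, vmv_mul, hvm, sub_mul, mul_sub, mul_one, mul_sub, mul_one,
        mul_vmv, vmv_vmv, ← hadef, ← hcdef]
      abel
    rw [hexp, hUV, hMdef, hBdef]
    abel
  have hdet : (moserLax A x ξ - z • 1).det = B.det * ((1 + Vt * (G * U)).det) := by
    have hfac : B + U * Vt = B * (1 + G * (U * Vt)) := by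
      rw [mul_add, mul_one, ← mul_assoc, hBG, one_mul]
    rw [hL, hfac, det_mul, ← Matrix.mul_assoc G U Vt, Matrix.det_one_add_mul_comm]
  have hGU : G * U = GU := by
    ext i k
    show (∑ l, G i l * (![x, ξ, a] k l)) = (![G *ᵥ x, G *ᵥ ξ, G *ᵥ a] k) i
    fin_cases k <;> simp [mulVec, dotProduct]
  have hentry : ∀ j k : Fin 3, (Vt * GU) j k =
      (![-x, c • ξ - a, -ξ] j) ⬝ᵥ (![G *ᵥ x, G *ᵥ ξ, G *ᵥ a] k) := by
    intro j k
    simp only [hVtdef, hGUdef, mul_apply, Matrix.of_apply, dotProduct]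
  have e00 : (Vt * GU) 0 0 = -r := by
    rw [hentry]; show (-x) ⬝ᵥ (G *ᵥ x) = -r; rw [neg_dotProduct, h1]
  have e01 : (Vt * GU) 0 1 = -q := by
    rw [hentry]; show (-x) ⬝ᵥ (G *ᵥ ξ) = -q; rw [neg_dotProduct, h2]
  have e02 : (Vt * GU) 0 2 = -(s + z * q - s * r) := by
    rw [hentry]; show (-x) ⬝ᵥ (G *ᵥ a) = _; rw [neg_dotProduct, h5]
  have e10 : (Vt * GU) 1 0 = c * q - (s + z * q - s * r) := by
    rw [hentry]; show (c • ξ - a) ⬝ᵥ (G *ᵥ x) = _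
    rw [sub_dotProduct, smul_dotProduct, smul_eq_mul, h3, h7]
  have e11 : (Vt * GU) 1 1 = c * p - (1 + z * p - s * q) := by
    rw [hentry]; show (c • ξ - a) ⬝ᵥ (G *ᵥ ξ) = _
    rw [sub_dotProduct, smul_dotProduct, smul_eq_mul, h4, h8]
  have e12 : (Vt * GU) 1 2 =
      c * (1 + z * p - s * q) - (c + z * (1 + z * p - s * q) - s * (s + z * q - s * r)) := by
    rw [hentry]; show (c • ξ - a) ⬝ᵥ (G *ᵥ a) = _
    rw [sub_dotProduct, smul_dotProduct, smul_eq_mul, h6, h9]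
  have e20 : (Vt * GU) 2 0 = -q := by
    rw [hentry]; show (-ξ) ⬝ᵥ (G *ᵥ x) = -q; rw [neg_dotProduct, h3]
  have e21 : (Vt * GU) 2 1 = -p := by
    rw [hentry]; show (-ξ) ⬝ᵥ (G *ᵥ ξ) = -p; rw [neg_dotProduct, h4]
  have e22 : (Vt * GU) 2 2 = -(1 + z * p - s * q) := by
    rw [hentry]; show (-ξ) ⬝ᵥ (G *ᵥ a) = _; rw [neg_dotProduct, h6]
  have f00 : ((1 + Vt * GU : Matrix (Fin 3) (Fin 3) ℝ)) 0 0 = 1 + -r := by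
    rw [Matrix.add_apply, e00, Matrix.one_apply_eq]
  have f01 : ((1 + Vt * GU : Matrix (Fin 3) (Fin 3) ℝ)) 0 1 = -q := by
    rw [Matrix.add_apply, e01, Matrix.one_apply_ne (by decide), zero_add]
  have f02 : ((1 + Vt * GU : Matrix (Fin 3) (Fin 3) ℝ)) 0 2 = -(s + z * q - s * r) := by
    rw [Matrix.add_apply, e02, Matrix.one_apply_ne (by decide), zero_add]
  have f10 : ((1 + Vt * GU : Matrix (Fin 3) (Fin 3) ℝ)) 1 0 = c * q - (s + z * q - s * r) := by
    rw [Matrix.add_apply, e10, Matrix.one_apply_ne (by decide), zero_add]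
  have f11 : ((1 + Vt * GU : Matrix (Fin 3) (Fin 3) ℝ)) 1 1 = 1 + (c * p - (1 + z * p - s * q)) := by
    rw [Matrix.add_apply, e11, Matrix.one_apply_eq]
  have f12 : ((1 + Vt * GU : Matrix (Fin 3) (Fin 3) ℝ)) 1 2 =
      c * (1 + z * p - s * q) - (c + z * (1 + z * p - s * q) - s * (s + z * q - s * r)) := by
    rw [Matrix.add_apply, e12, Matrix.one_apply_ne (by decide), zero_add]
  have f20 : ((1 + Vt * GU : Matrix (Fin 3) (Fin 3) ℝ)) 2 0 = -q := by
    rw [Matrix.add_apply, e20, Matrix.one_apply_ne (by decide), zero_add]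
  have f21 : ((1 + Vt * GU : Matrix (Fin 3) (Fin 3) ℝ)) 2 1 = -p := by
    rw [Matrix.add_apply, e21, Matrix.one_apply_ne (by decide), zero_add]
  have f22 : ((1 + Vt * GU : Matrix (Fin 3) (Fin 3) ℝ)) 2 2 = 1 + -(1 + z * p - s * q) := by
    rw [Matrix.add_apply, e22, Matrix.one_apply_eq]
  have hdet3 : (1 + Vt * (G * U)).det = z * (p * r - p - q ^ 2) := by
    rw [hGU, Matrix.det_fin_three, f00, f01, f02, f10, f11, f12, f20, f21, f22]
    ring
  have hinv : (z • (1 : Matrix (Fin n) (Fin n) ℝ) - A)⁻¹ = -G := by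
    apply Matrix.inv_eq_right_inv
    rw [hzB, Matrix.neg_mul, Matrix.mul_neg, neg_neg, hBG]
  have hQ : ∀ u v : Fin n → ℝ, confocalQ A z u v = -(G *ᵥ u ⬝ᵥ v) := by
    intro u v
    rw [confocalQ, hinv, Matrix.neg_mulVec, neg_dotProduct]
  rw [hdet, hdet3, hQ, hQ, hQ, ← hpdef, ← hrdef, ← hqdef]
  rw [mul_comm B.det, mul_div_assoc, div_self hBdet0, mul_one]
  field_simp
  ring
end
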